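/- arXiv:1307.1105 — 2 statements merged into one kernel-verified Lean document; each statement's English description precedes it below -/
import Mathlib

section
/- Let u, S, T, h be smooth fields on ℝ × ℝ³ and set ω = ∇×u. If the momentum equation holds in the Crocco form ∂u/∂t − u×ω = T∇S − ∇(h + |u|²/2), then the fluid helicity density u·ω satisfies the balance law ∂(u·ω)/∂t + ∇·[ (u·ω) u + (h − |u|²/2) ω ] = T ω·∇S + u·(∇T × ∇S). -/
noncomputable section

/-- Vectors in ℝ³. -/
abbrev Vec3 : Type := Fin 3 → ℝ

/-- Points of space-time: `(t, x)` with `t : ℝ`, `x : Fin 3 → ℝ`. -/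
abbrev Pt : Type := ℝ × Vec3

/-- Euclidean dot product on ℝ³. -/
def dot3 (a b : Vec3) : ℝ := ∑ i, a i * b i

/-- Cross product on ℝ³. -/
def cross3 (a b : Vec3) : Vec3 :=
  ![a 1 * b 2 - a 2 * b 1, a 2 * b 0 - a 0 * b 2, a 0 * b 1 - a 1 * b 0]

/-- Spatial partial derivative ∂f/∂xᵢ of a scalar field. -/
def pd (i : Fin 3) (f : Pt → ℝ) (p : Pt) : ℝ :=
  fderiv ℝ (fun x => f (p.1, x)) p.2 (Pi.single i 1)

/-- Time derivative ∂f/∂t of a scalar field. -/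
def dt (f : Pt → ℝ) (p : Pt) : ℝ := deriv (fun s => f (s, p.2)) p.1

/-- Time derivative of a vector field, componentwise. -/
def dtVec (F : Pt → Vec3) (p : Pt) : Vec3 := fun i => dt (fun q => F q i) p

/-- Spatial gradient ∇f of a scalar field. -/
def grad3 (f : Pt → ℝ) (p : Pt) : Vec3 := fun i => pd i f p

/-- Spatial divergence ∇·F of a vector field. -/
def div3 (F : Pt → Vec3) (p : Pt) : ℝ := ∑ i, pd i (fun q => F q i) p

/-- Spatial curl ∇×F of a vector field. -/
def curl3 (F : Pt → Vec3) (p : Pt) : Vec3 :=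
  ![pd 1 (fun q => F q 2) p - pd 2 (fun q => F q 1) p,
    pd 2 (fun q => F q 0) p - pd 0 (fun q => F q 2) p,
    pd 0 (fun q => F q 1) p - pd 1 (fun q => F q 0) p]

/-- Directional derivative (u·∇)f of a scalar field. -/
def dirD (u : Pt → Vec3) (f : Pt → ℝ) (p : Pt) : ℝ := ∑ i, u p i * pd i f p

/-- Directional derivative (u·∇)F of a vector field. -/
def dirDVec (u F : Pt → Vec3) (p : Pt) : Vec3 :=
  fun j => ∑ i, u p i * pd i (fun q => F q j) p

/-- (∇u)ᵀ·A, the vector with i-th component ∑ⱼ (∂uʲ/∂xⁱ) Aⱼ. -/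
def gradTdot (u A : Pt → Vec3) (p : Pt) : Vec3 :=
  fun i => ∑ j, pd i (fun q => u q j) p * A p j

/-- A field is smooth when it is C^∞ jointly in time and space. -/
def SmoothS (f : Pt → ℝ) : Prop := ContDiff ℝ (⊤ : ℕ∞) f

/-- A vector field is smooth when it is C^∞ jointly in time and space. -/
def SmoothV (F : Pt → Vec3) : Prop := ContDiff ℝ (⊤ : ℕ∞) F

namespace Helicity

def Dp (v : Pt) (f : Pt → ℝ) : Pt → ℝ := fun p => fderiv ℝ f p v

theorem smooth_diff {f : Pt → ℝ} (hf : ContDiff ℝ (⊤:ℕ∞) f) : Differentiable ℝ f :=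
  hf.differentiable (by simp)

@[fun_prop]
theorem Dp_smooth (v : Pt) {f : Pt → ℝ} (hf : ContDiff ℝ (⊤:ℕ∞) f) :
    ContDiff ℝ (⊤:ℕ∞) (Dp v f) := by
  have h1 : ContDiff ℝ (⊤:ℕ∞) (fderiv ℝ f) := hf.fderiv_right (mod_cast le_top)
  exact (ContinuousLinearMap.apply ℝ ℝ v).contDiff.comp h1

theorem pd_eq {f : Pt → ℝ} (hf : ContDiff ℝ (⊤:ℕ∞) f) (i : Fin 3) (p : Pt) :
    pd i f p = Dp (0, Pi.single i 1) f p := by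
  have hfd : HasFDerivAt f (fderiv ℝ f p) p := (smooth_diff hf p).hasFDerivAt
  have hin : HasFDerivAt (fun x : Vec3 => (p.1, x))
      (ContinuousLinearMap.inr ℝ ℝ Vec3) p.2 := hasFDerivAt_prodMk_right p.1 p.2
  have := (hfd.comp p.2 hin).fderiv
  simp only [pd, Dp, Function.comp_def] at *
  rw [this]; rfl

theorem dt_eq {f : Pt → ℝ} (hf : ContDiff ℝ (⊤:ℕ∞) f) (p : Pt) :
    dt f p = Dp (1, 0) f p := by
  have hfd : HasFDerivAt f (fderiv ℝ f p) p := (smooth_diff hf p).hasFDerivAt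
  have hin : HasDerivAt (fun s : ℝ => (s, p.2)) ((1:ℝ), (0:Vec3)) p.1 :=
    (hasDerivAt_id p.1).prodMk (hasDerivAt_const p.1 p.2)
  have := (hfd.comp_hasDerivAt p.1 hin).deriv
  simp only [dt, Dp, Function.comp_def] at *
  rw [this]

theorem Dp_comm {f : Pt → ℝ} (hf : ContDiff ℝ (⊤:ℕ∞) f) (v w : Pt) (p : Pt) :
    Dp v (Dp w f) p = Dp w (Dp v f) p := by
  have hsym : IsSymmSndFDerivAt ℝ f p := (hf.contDiffAt).isSymmSndFDerivAt (by simp only [minSmoothness_of_isRCLikeNormedField]; exact WithTop.coe_le_coe.mpr (le_top : (2:ℕ∞) ≤ ⊤))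
  have hdf : ContDiff ℝ (⊤:ℕ∞) (fderiv ℝ f) := hf.fderiv_right (mod_cast le_top)
  have hdfd : Differentiable ℝ (fderiv ℝ f) := hdf.differentiable (by simp)
  have key : ∀ z : Pt, ∀ y : Pt, fderiv ℝ (fun q => fderiv ℝ f q z) p y
      = fderiv ℝ (fderiv ℝ f) p y z := by
    intro z y
    rw [fderiv_clm_apply (hdfd p) (differentiableAt_const z)]
    simp
  show fderiv ℝ (fun q => fderiv ℝ f q w) p v = fderiv ℝ (fun q => fderiv ℝ f q v) p w
  rw [key, key, hsym]

theorem Dp_add {f g : Pt → ℝ} (hf : ContDiff ℝ (⊤:ℕ∞) f) (hg : ContDiff ℝ (⊤:ℕ∞) g)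
    (v p : Pt) : Dp v (fun q => f q + g q) p = Dp v f p + Dp v g p := by
  simp only [Dp]
  rw [fderiv_fun_add (smooth_diff hf p) (smooth_diff hg p)]; rfl

theorem Dp_sub {f g : Pt → ℝ} (hf : ContDiff ℝ (⊤:ℕ∞) f) (hg : ContDiff ℝ (⊤:ℕ∞) g)
    (v p : Pt) : Dp v (fun q => f q - g q) p = Dp v f p - Dp v g p := by
  simp only [Dp]
  rw [fderiv_fun_sub (smooth_diff hf p) (smooth_diff hg p)]; rfl

theorem Dp_mul {f g : Pt → ℝ} (hf : ContDiff ℝ (⊤:ℕ∞) f) (hg : ContDiff ℝ (⊤:ℕ∞) g)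
    (v p : Pt) : Dp v (fun q => f q * g q) p = f p * Dp v g p + g p * Dp v f p := by
  simp only [Dp]
  rw [fderiv_fun_mul (smooth_diff hf p) (smooth_diff hg p)]; rfl

theorem Dp_div_const {f : Pt → ℝ} (hf : ContDiff ℝ (⊤:ℕ∞) f) (c : ℝ)
    (v p : Pt) : Dp v (fun q => f q / c) p = Dp v f p / c := by
  simp only [Dp]
  have : (fun q => f q / c) = fun q => f q * (1/c) := by funext q; ring
  rw [this, fderiv_mul_const (smooth_diff hf p)]
  simp [div_eq_mul_inv, mul_comm]

end Helicity

namespace Helicity2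
open Helicity

theorem pd_fun_eq {f : Pt → ℝ} (hf : ContDiff ℝ (⊤:ℕ∞) f) (i : Fin 3) :
    (fun p => pd i f p) = Dp (0, Pi.single i 1) f := funext (pd_eq hf i)

theorem dt_fun_eq {f : Pt → ℝ} (hf : ContDiff ℝ (⊤:ℕ∞) f) :
    (fun p => dt f p) = Dp (1, 0) f := funext (dt_eq hf)

@[fun_prop]
theorem pd_smooth (i : Fin 3) {f : Pt → ℝ} (hf : ContDiff ℝ (⊤:ℕ∞) f) :
    ContDiff ℝ (⊤:ℕ∞) (fun p => pd i f p) := by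
  rw [pd_fun_eq hf i]; exact Dp_smooth _ hf

@[fun_prop]
theorem dt_smooth {f : Pt → ℝ} (hf : ContDiff ℝ (⊤:ℕ∞) f) :
    ContDiff ℝ (⊤:ℕ∞) (fun p => dt f p) := by
  rw [dt_fun_eq hf]; exact Dp_smooth _ hf

theorem pd_add {f g : Pt → ℝ} (hf : ContDiff ℝ (⊤:ℕ∞) f) (hg : ContDiff ℝ (⊤:ℕ∞) g)
    (i : Fin 3) (p : Pt) : pd i (fun q => f q + g q) p = pd i f p + pd i g p := by
  rw [pd_eq (hf.add hg), pd_eq hf, pd_eq hg, Dp_add hf hg]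

theorem pd_sub {f g : Pt → ℝ} (hf : ContDiff ℝ (⊤:ℕ∞) f) (hg : ContDiff ℝ (⊤:ℕ∞) g)
    (i : Fin 3) (p : Pt) : pd i (fun q => f q - g q) p = pd i f p - pd i g p := by
  rw [pd_eq (hf.sub hg), pd_eq hf, pd_eq hg, Dp_sub hf hg]

theorem pd_mul {f g : Pt → ℝ} (hf : ContDiff ℝ (⊤:ℕ∞) f) (hg : ContDiff ℝ (⊤:ℕ∞) g)
    (i : Fin 3) (p : Pt) :
    pd i (fun q => f q * g q) p = f p * pd i g p + g p * pd i f p := by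
  rw [pd_eq (hf.mul hg), pd_eq hf, pd_eq hg, Dp_mul hf hg]

theorem pd_div_const {f : Pt → ℝ} (hf : ContDiff ℝ (⊤:ℕ∞) f) (c : ℝ)
    (i : Fin 3) (p : Pt) : pd i (fun q => f q / c) p = pd i f p / c := by
  rw [pd_eq (hf.div_const c), pd_eq hf, Dp_div_const hf c]

theorem dt_add {f g : Pt → ℝ} (hf : ContDiff ℝ (⊤:ℕ∞) f) (hg : ContDiff ℝ (⊤:ℕ∞) g)
    (p : Pt) : dt (fun q => f q + g q) p = dt f p + dt g p := by
  rw [dt_eq (hf.add hg), dt_eq hf, dt_eq hg, Dp_add hf hg]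

theorem dt_sub {f g : Pt → ℝ} (hf : ContDiff ℝ (⊤:ℕ∞) f) (hg : ContDiff ℝ (⊤:ℕ∞) g)
    (p : Pt) : dt (fun q => f q - g q) p = dt f p - dt g p := by
  rw [dt_eq (hf.sub hg), dt_eq hf, dt_eq hg, Dp_sub hf hg]

theorem dt_mul {f g : Pt → ℝ} (hf : ContDiff ℝ (⊤:ℕ∞) f) (hg : ContDiff ℝ (⊤:ℕ∞) g)
    (p : Pt) : dt (fun q => f q * g q) p = f p * dt g p + g p * dt f p := by
  rw [dt_eq (hf.mul hg), dt_eq hf, dt_eq hg, Dp_mul hf hg]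

theorem dt_div_const {f : Pt → ℝ} (hf : ContDiff ℝ (⊤:ℕ∞) f) (c : ℝ)
    (p : Pt) : dt (fun q => f q / c) p = dt f p / c := by
  rw [dt_eq (hf.div_const c), dt_eq hf, Dp_div_const hf c]

theorem dt_pd_comm {f : Pt → ℝ} (hf : ContDiff ℝ (⊤:ℕ∞) f) (i : Fin 3) (p : Pt) :
    dt (fun q => pd i f q) p = pd i (fun q => dt f q) p := by
  rw [pd_fun_eq hf i, dt_fun_eq hf, dt_eq (Dp_smooth _ hf), pd_eq (Dp_smooth _ hf),
    Dp_comm hf]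

theorem pd_pd_comm {f : Pt → ℝ} (hf : ContDiff ℝ (⊤:ℕ∞) f) (i j : Fin 3) (p : Pt) :
    pd i (fun q => pd j f q) p = pd j (fun q => pd i f q) p := by
  rw [pd_fun_eq hf i, pd_fun_eq hf j, pd_eq (Dp_smooth _ hf), pd_eq (Dp_smooth _ hf),
    Dp_comm hf]

theorem pd_c10 {f : Pt → ℝ} (hf : ContDiff ℝ (⊤:ℕ∞) f) (p : Pt) :
    pd 1 (fun q => pd 0 f q) p = pd 0 (fun q => pd 1 f q) p := pd_pd_comm hf 1 0 p
theorem pd_c20 {f : Pt → ℝ} (hf : ContDiff ℝ (⊤:ℕ∞) f) (p : Pt) :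
    pd 2 (fun q => pd 0 f q) p = pd 0 (fun q => pd 2 f q) p := pd_pd_comm hf 2 0 p
theorem pd_c21 {f : Pt → ℝ} (hf : ContDiff ℝ (⊤:ℕ∞) f) (p : Pt) :
    pd 2 (fun q => pd 1 f q) p = pd 1 (fun q => pd 2 f q) p := pd_pd_comm hf 2 1 p


end Helicity2

open Helicity Helicity2

set_option maxHeartbeats 4000000 in
/-- Crocco-form momentum equation implies the fluid helicity
    balance law with source T ω·∇S + u·(∇T × ∇S). -/
theorem helicity_balance_of_crocco
    (u : Pt → Vec3) (S T h : Pt → ℝ)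
    (hu : SmoothV u) (hS : SmoothS S) (hT : SmoothS T) (hh : SmoothS h)
    (hmom : ∀ p : Pt,
      dtVec u p - cross3 (u p) (curl3 u p)
        = T p • grad3 S p
          - grad3 (fun q => h q + dot3 (u q) (u q) / 2) p) :
    ∀ p : Pt,
      dt (fun q => dot3 (u q) (curl3 u q)) p
        + div3 (fun q =>
            dot3 (u q) (curl3 u q) • u q
              + (h q - dot3 (u q) (u q) / 2) • curl3 u q) p
        = T p * dot3 (curl3 u p) (grad3 S p)
          + dot3 (u p) (cross3 (grad3 T p) (grad3 S p)) := by
  intro p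
  have hu' : ContDiff ℝ (⊤:ℕ∞) u := hu
  have hS' : ContDiff ℝ (⊤:ℕ∞) S := hS
  have hT' : ContDiff ℝ (⊤:ℕ∞) T := hT
  have hh' : ContDiff ℝ (⊤:ℕ∞) h := hh
  have hm : ∀ (q : Pt) (j : Fin 3), dt (fun r => u r j) q
      = cross3 (u q) (curl3 u q) j + T q * pd j S q
        - pd j (fun r => h r + dot3 (u r) (u r) / 2) q := by
    intro q j
    have H := congrFun (hmom q) j
    simp only [Pi.sub_apply, dtVec, Pi.smul_apply, grad3, smul_eq_mul] at H
    linarith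
  simp only [dot3, div3, curl3, grad3, cross3, Fin.sum_univ_three, Matrix.cons_val_zero,
    Matrix.cons_val_one, Matrix.cons_val_two, Matrix.head_cons, Matrix.tail_cons,
    Pi.add_apply, Pi.smul_apply, Pi.sub_apply, smul_eq_mul]
  simp (disch := fun_prop (disch := norm_num)) only [hm, dt_add, dt_sub, dt_mul,
    dt_div_const, dt_pd_comm, pd_add, pd_sub, pd_mul, pd_div_const, pd_c10, pd_c20, pd_c21,
    dot3, curl3, cross3, Fin.sum_univ_three, Matrix.cons_val_zero, Matrix.cons_val_one,
    Matrix.cons_val_two, Matrix.head_cons, Matrix.tail_cons]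
  ring
end
end

section
/- Let u and h be smooth fields on ℝ × ℝ³ and set ω = ∇×u. If the momentum equation holds in the barotropic Crocco form ∂u/∂t − u×ω + ∇(h + |u|²/2) = 0 (no entropy-gradient source), then the fluid helicity density h_f = u·ω satisfies the local conservation law ∂h_f/∂t + ∇·[ u h_f + (h − |u|²/2) ω ] = 0. -/
noncomputable section

variable {f g : Pt → ℝ}

theorem sliceX_smooth (hf : ContDiff ℝ (⊤:ℕ∞) f) (t : ℝ) :
    ContDiff ℝ (⊤:ℕ∞) (fun x : Vec3 => f (t, x)) :=
  hf.comp (contDiff_const.prodMk contDiff_id)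

theorem sliceT_smooth (hf : ContDiff ℝ (⊤:ℕ∞) f) (x : Vec3) :
    ContDiff ℝ (⊤:ℕ∞) (fun s : ℝ => f (s, x)) :=
  hf.comp (contDiff_id.prodMk contDiff_const)

theorem pd_eq (hf : ContDiff ℝ (⊤:ℕ∞) f) (i : Fin 3) (p : Pt) :
    pd i f p = fderiv ℝ f p ((0 : ℝ), Pi.single i 1) := by
  obtain ⟨t, x⟩ := p
  have h1 : HasFDerivAt (fun y : Vec3 => (t, y)) (ContinuousLinearMap.inr ℝ ℝ Vec3) x :=
    hasFDerivAt_prodMk_right t x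
  have h2 : HasFDerivAt f (fderiv ℝ f (t, x)) (t, x) :=
    ((hf.differentiable (by norm_cast)) (t, x)).hasFDerivAt
  have h3 := h2.comp x h1
  rw [pd, show (fun y => f (t, y)) = f ∘ Prod.mk t from rfl, h3.fderiv]
  simp

theorem dt_eq (hf : ContDiff ℝ (⊤:ℕ∞) f) (p : Pt) :
    dt f p = fderiv ℝ f p ((1 : ℝ), (0 : Vec3)) := by
  obtain ⟨t, x⟩ := p
  have h1 : HasFDerivAt (fun s : ℝ => (s, x)) (ContinuousLinearMap.inl ℝ ℝ Vec3) t :=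
    hasFDerivAt_prodMk_left t x
  have h2 : HasFDerivAt f (fderiv ℝ f (t, x)) (t, x) :=
    ((hf.differentiable (by norm_cast)) (t, x)).hasFDerivAt
  have h3 := (h2.comp t h1).hasDerivAt
  rw [dt, show (fun s => f (s, x)) = f ∘ (fun s => (s, x)) from rfl, h3.deriv]
  simp

theorem fd_smooth (hf : ContDiff ℝ (⊤:ℕ∞) f) (v : Pt) :
    ContDiff ℝ (⊤:ℕ∞) (fun p => fderiv ℝ f p v) :=
  (ContinuousLinearMap.apply ℝ ℝ v).contDiff.comp (hf.fderiv_right (by norm_cast))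

@[fun_prop]
theorem pd_smooth (i : Fin 3) (hf : ContDiff ℝ (⊤:ℕ∞) f) : ContDiff ℝ (⊤:ℕ∞) (pd i f) := by
  have : pd i f = fun p => fderiv ℝ f p ((0:ℝ), Pi.single i 1) := funext fun p => pd_eq hf i p
  rw [this]; exact fd_smooth hf _

@[fun_prop]
theorem dt_smooth (hf : ContDiff ℝ (⊤:ℕ∞) f) : ContDiff ℝ (⊤:ℕ∞) (dt f) := by
  have : dt f = fun p => fderiv ℝ f p ((1:ℝ), (0:Vec3)) := funext fun p => dt_eq hf p
  rw [this]; exact fd_smooth hf _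

theorem mc2 : (2 : WithTop ℕ∞) ≤ ((⊤:ℕ∞) : WithTop ℕ∞) := by norm_cast
theorem mc1 : (1 : WithTop ℕ∞) ≤ ((⊤:ℕ∞) : WithTop ℕ∞) := by norm_cast

theorem fd_apply_hasFDerivAt (hf : ContDiff ℝ (⊤:ℕ∞) f) (v : Pt) (p : Pt) :
    HasFDerivAt (fun q => fderiv ℝ f q v)
      ((ContinuousLinearMap.apply ℝ ℝ v).comp (fderiv ℝ (fderiv ℝ f) p)) p := by
  have hd : DifferentiableAt ℝ (fderiv ℝ f) p :=
    ((hf.fderiv_right (m := ((⊤:ℕ∞) : WithTop ℕ∞)) (by norm_cast)).differentiable (by norm_cast)) p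
  exact (ContinuousLinearMap.apply ℝ ℝ v).hasFDerivAt.comp p hd.hasFDerivAt

theorem fd_comm (hf : ContDiff ℝ (⊤:ℕ∞) f) (v w p : Pt) :
    fderiv ℝ (fun q => fderiv ℝ f q v) p w = fderiv ℝ (fun q => fderiv ℝ f q w) p v := by
  rw [(fd_apply_hasFDerivAt hf v p).fderiv, (fd_apply_hasFDerivAt hf w p).fderiv]
  exact (hf.contDiffAt.isSymmSndFDerivAt (by rw [minSmoothness_of_isRCLikeNormedField]; exact mc2)).eq w v

theorem pd_pd_comm (hf : ContDiff ℝ (⊤:ℕ∞) f) (i j : Fin 3) (p : Pt) :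
    pd i (pd j f) p = pd j (pd i f) p := by
  rw [show pd j f = fun q => fderiv ℝ f q ((0:ℝ), Pi.single j 1) from funext fun q => pd_eq hf j q,
      show pd i f = fun q => fderiv ℝ f q ((0:ℝ), Pi.single i 1) from funext fun q => pd_eq hf i q,
      pd_eq (fd_smooth hf _) i p, pd_eq (fd_smooth hf _) j p]
  exact fd_comm hf _ _ p

theorem dt_pd_comm (hf : ContDiff ℝ (⊤:ℕ∞) f) (i : Fin 3) (p : Pt) :
    dt (pd i f) p = pd i (dt f) p := by
  rw [show pd i f = fun q => fderiv ℝ f q ((0:ℝ), Pi.single i 1) from funext fun q => pd_eq hf i q,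
      show dt f = fun q => fderiv ℝ f q ((1:ℝ), (0:Vec3)) from funext fun q => dt_eq hf q,
      dt_eq (fd_smooth hf _) p, pd_eq (fd_smooth hf _) i p]
  exact fd_comm hf _ _ p

theorem diffX (hf : ContDiff ℝ (⊤:ℕ∞) f) (t : ℝ) (x : Vec3) :
    DifferentiableAt ℝ (fun y : Vec3 => f (t, y)) x :=
  ((sliceX_smooth hf t).differentiable (by norm_cast)) x

theorem diffT (hf : ContDiff ℝ (⊤:ℕ∞) f) (t : ℝ) (x : Vec3) :
    DifferentiableAt ℝ (fun s : ℝ => f (s, x)) t :=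
  ((sliceT_smooth hf x).differentiable (by norm_cast)) t

theorem pd_add (hf : ContDiff ℝ (⊤:ℕ∞) f) (hg : ContDiff ℝ (⊤:ℕ∞) g) (i : Fin 3) (p : Pt) :
    pd i (fun q => f q + g q) p = pd i f p + pd i g p := by
  obtain ⟨t, x⟩ := p
  simp only [pd, fderiv_fun_add (diffX hf t x) (diffX hg t x), ContinuousLinearMap.add_apply]

theorem pd_sub (hf : ContDiff ℝ (⊤:ℕ∞) f) (hg : ContDiff ℝ (⊤:ℕ∞) g) (i : Fin 3) (p : Pt) :
    pd i (fun q => f q - g q) p = pd i f p - pd i g p := by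
  obtain ⟨t, x⟩ := p
  simp only [pd, fderiv_fun_sub (diffX hf t x) (diffX hg t x), ContinuousLinearMap.sub_apply]

theorem pd_mul (hf : ContDiff ℝ (⊤:ℕ∞) f) (hg : ContDiff ℝ (⊤:ℕ∞) g) (i : Fin 3) (p : Pt) :
    pd i (fun q => f q * g q) p = f p * pd i g p + g p * pd i f p := by
  obtain ⟨t, x⟩ := p
  simp only [pd, fderiv_fun_mul (diffX hf t x) (diffX hg t x), ContinuousLinearMap.add_apply,
    ContinuousLinearMap.smul_apply, smul_eq_mul]

theorem pd_div2 (hf : ContDiff ℝ (⊤:ℕ∞) f) (i : Fin 3) (p : Pt) :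
    pd i (fun q => f q / 2) p = pd i f p / 2 := by
  obtain ⟨t, x⟩ := p
  simp only [pd, div_eq_mul_inv, fderiv_mul_const (diffX hf t x),
    ContinuousLinearMap.smul_apply, smul_eq_mul]
  ring

theorem dt_add (hf : ContDiff ℝ (⊤:ℕ∞) f) (hg : ContDiff ℝ (⊤:ℕ∞) g) (p : Pt) :
    dt (fun q => f q + g q) p = dt f p + dt g p := by
  obtain ⟨t, x⟩ := p
  simp only [dt, deriv_fun_add (diffT hf t x) (diffT hg t x)]

theorem dt_sub (hf : ContDiff ℝ (⊤:ℕ∞) f) (hg : ContDiff ℝ (⊤:ℕ∞) g) (p : Pt) :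
    dt (fun q => f q - g q) p = dt f p - dt g p := by
  obtain ⟨t, x⟩ := p
  simp only [dt, deriv_fun_sub (diffT hf t x) (diffT hg t x)]

theorem dt_mul (hf : ContDiff ℝ (⊤:ℕ∞) f) (hg : ContDiff ℝ (⊤:ℕ∞) g) (p : Pt) :
    dt (fun q => f q * g q) p = dt f p * g p + f p * dt g p := by
  obtain ⟨t, x⟩ := p
  simp only [dt, deriv_fun_mul (diffT hf t x) (diffT hg t x)]

theorem dt_div2 (f : Pt → ℝ) (p : Pt) :
    dt (fun q => f q / 2) p = dt f p / 2 := by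
  simp only [dt, deriv_div_const]


/-- barotropic Crocco momentum equation implies local
    conservation of the fluid helicity density h_f = u·ω. -/
theorem helicity_conservation_barotropic
    (u : Pt → Vec3) (h : Pt → ℝ)
    (hu : SmoothV u) (hh : SmoothS h)
    (hmom : ∀ p : Pt,
      dtVec u p - cross3 (u p) (curl3 u p)
        + grad3 (fun q => h q + dot3 (u q) (u q) / 2) p = 0) :
    ∀ p : Pt,
      dt (fun q => dot3 (u q) (curl3 u q)) p
        + div3 (fun q =>
            dot3 (u q) (curl3 u q) • u q
              + (h q - dot3 (u q) (u q) / 2) • curl3 u q) p = 0 := by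
  have hh' : ContDiff ℝ (⊤:ℕ∞) h := hh
  have hU : ∀ j, ContDiff ℝ (⊤:ℕ∞) (fun q => u q j) := fun j => (contDiff_pi.mp hu) j
  have hU0 := hU 0; have hU1 := hU 1; have hU2 := hU 2
  have hm : ∀ (j : Fin 3) (q : Pt), dt (fun r => u r j) q
      = cross3 (u q) (curl3 u q) j - pd j (fun r => h r + dot3 (u r) (u r) / 2) q := by
    intro j q
    have := congrFun (hmom q) j
    simp only [Pi.add_apply, Pi.sub_apply, Pi.zero_apply, dtVec, grad3] at this
    linarith
  have hkey : ∀ (i j : Fin 3) (q : Pt), dt (pd i (fun r => u r j)) q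
      = pd i (fun r => cross3 (u r) (curl3 u r) j
          - pd j (fun s => h s + dot3 (u s) (u s) / 2) r) q := by
    intro i j q
    rw [dt_pd_comm (hU j) i q]
    exact congrArg (fun F => pd i F q) (funext (hm j))
  intro p
  simp (disch := fun_prop (disch := norm_num)) only [dot3, cross3, curl3, div3, dtVec, grad3, Pi.add_apply,
    Pi.smul_apply, smul_eq_mul, Fin.sum_univ_three, Matrix.cons_val_zero,
    Matrix.cons_val_one, Matrix.head_cons, Matrix.cons_val_two, Matrix.tail_cons,
    hm, hkey, pd_add, pd_sub, pd_mul, pd_div2, dt_add, dt_sub, dt_mul, dt_div2]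
  simp only [pd_pd_comm hU0 1 0 p, pd_pd_comm hU0 2 0 p, pd_pd_comm hU0 2 1 p,
    pd_pd_comm hU1 1 0 p, pd_pd_comm hU1 2 0 p, pd_pd_comm hU1 2 1 p,
    pd_pd_comm hU2 1 0 p, pd_pd_comm hU2 2 0 p, pd_pd_comm hU2 2 1 p,
    pd_pd_comm hh' 1 0 p, pd_pd_comm hh' 2 0 p, pd_pd_comm hh' 2 1 p]
  ring
end
end
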